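/- Let G be a chain-connected anterial graph over a finite node set V and let C ⊆ V. Then the intervened graph do_C(G) is a chain-connected anterial graph. -/

import Mathlib

open MeasureTheory

universe u v w

/-! ## Mixed graphs -/

/-- A mixed graph over a node set `V`: directed, undirected and bidirected edges.
The undirected and bidirected edge relations are read symmetrically. -/
structure MixedGraph (V : Type u) where
  dir : V → V → Prop
  undir : V → V → Prop
  bidir : V → V → Prop

namespace MixedGraph

variable {V : Type u} (G : MixedGraph V)

/-- The (symmetrised) undirected-edge relation: there is an undirected edge between `a` and `b`. -/
def Undir (a b : V) : Prop := G.undir a b ∨ G.undir b a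

/-- The (symmetrised) bidirected-edge relation. -/
def Bidir (a b : V) : Prop := G.bidir a b ∨ G.bidir b a

/-- Two nodes are adjacent if they are joined by an edge of any type. -/
def Adj (a b : V) : Prop := G.dir a b ∨ G.dir b a ∨ G.Undir a b ∨ G.Bidir a b

/-- One step of a semi-directed path: a directed edge `a → b` or an undirected edge. -/
def sdStep (a b : V) : Prop := G.dir a b ∨ G.Undir a b

/-- There is a semi-directed path (possibly trivial) from `a` to `b`. -/
def SemiDirReach (a b : V) : Prop := Relation.ReflTransGen G.sdStep a b

/-- The anterior of a node set `S`. -/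
def ant (S : Set V) : Set V := {x | x ∉ S ∧ ∃ i ∈ S, G.SemiDirReach x i}

/-- There is a semi-directed cycle in `G`. -/
def HasSemiDirCycle : Prop := ∃ a b, G.dir a b ∧ G.SemiDirReach b a

/-- A chain mixed graph: no semi-directed cycles. -/
def IsCMG : Prop := ¬ G.HasSemiDirCycle

/-- An anterial graph: a chain mixed graph in which no two nodes joined by a bidirected
edge are connected by a semi-directed path. -/
def IsAnterial : Prop := G.IsCMG ∧ ∀ a b, G.Bidir a b → ¬ G.SemiDirReach a b

/-- The chain component of a node `i`: all nodes connected to `i` by a sequence of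
undirected edges (including `i` itself). -/
def ChainComp (i : V) : Set V := {j | Relation.ReflTransGen G.Undir i j}

/-- Chain-connected: `i ↔ j` implies `i ↔ k` for every `k` in the chain component of `j`. -/
def ChainConnected : Prop := ∀ i j k : V, G.Bidir i j → k ∈ G.ChainComp j → G.Bidir i k

/-- The neighbours of a node. -/
def neSet (i : V) : Set V := {x | G.Undir x i}

/-- The parents of a node. -/
def paSet (i : V) : Set V := {x | G.dir x i}

lemma undir_symmetric : Symmetric G.Undir := fun _ _ h => h.elim Or.inr Or.inl

end MixedGraph

/-- The kind of an edge traversed on a walk, relative to the direction of travel. -/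
inductive EdgeKind : Type
  | dirR   -- directed edge pointing forwards
  | dirL   -- directed edge pointing backwards
  | undirE -- undirected edge
  | bidirE -- bidirected edge

/-- Whether an edge of the given kind joins `a` to `b` (in the direction of travel). -/
def MixedGraph.edgeHolds {V : Type u} (G : MixedGraph V) : EdgeKind → V → V → Prop
  | .dirR, a, b => G.dir a b
  | .dirL, a, b => G.dir b a
  | .undirE, a, b => G.Undir a b
  | .bidirE, a, b => G.Bidir a b

/-- A walk in a mixed graph: a sequence of nodes in which every pair of consecutive nodes
is joined by an edge (nodes and edges may repeat). -/
structure GWalk {V : Type u} (G : MixedGraph V) where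
  len : ℕ
  node : ℕ → V
  kind : ℕ → EdgeKind
  valid : ∀ k, k < len → G.edgeHolds (kind k) (node k) (node (k + 1))

namespace GWalk

variable {V : Type u} {G : MixedGraph V} (w : GWalk G)

/-- The nodes with indices in `[a, b]` form a section of the walk: a maximal subwalk
all of whose edges are undirected. -/
def IsSection (a b : ℕ) : Prop :=
  a ≤ b ∧ b ≤ w.len ∧ (∀ k, a ≤ k → k < b → w.kind k = EdgeKind.undirE) ∧
    (a = 0 ∨ w.kind (a - 1) ≠ EdgeKind.undirE) ∧ (b = w.len ∨ w.kind b ≠ EdgeKind.undirE)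

/-- A collider section: the two edges of the walk immediately adjacent to the section
both have an arrowhead at the section. -/
def IsColliderSection (a b : ℕ) : Prop :=
  w.IsSection a b ∧ 0 < a ∧ b < w.len ∧
    (w.kind (a - 1) = EdgeKind.dirR ∨ w.kind (a - 1) = EdgeKind.bidirE) ∧
    (w.kind b = EdgeKind.dirL ∨ w.kind b = EdgeKind.bidirE)

/-- The walk is connecting given `C`: every collider section contains a node of `C` and
every non-collider section contains no node of `C`. -/
def ConnectingGiven (C : Set V) : Prop :=
  ∀ a b : ℕ, w.IsSection a b →
    (w.IsColliderSection a b → ∃ m, a ≤ m ∧ m ≤ b ∧ w.node m ∈ C) ∧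
    (¬ w.IsColliderSection a b → ∀ m, a ≤ m → m ≤ b → w.node m ∉ C)

/-- A semi-directed walk: every edge is undirected or directed forwards. -/
def IsSemiDirected : Prop :=
  ∀ k, k < w.len → (w.kind k = EdgeKind.dirR ∨ w.kind k = EdgeKind.undirE)

end GWalk

/-- Graphical separation: `A ⊥_G B | C` holds if there is no connecting walk given `C`
between a node of `A` and a node of `B`. -/
def MixedGraph.Sep {V : Type u} (G : MixedGraph V) (A B C : Set V) : Prop :=
  ¬ ∃ w : GWalk G, w.node 0 ∈ A ∧ w.node w.len ∈ B ∧ w.ConnectingGiven C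

/-- A primitive inducing path between `i` and `j`. -/
def PrimitiveInducingPath {V : Type u} (G : MixedGraph V) (i j : V) : Prop :=
  ∃ w : GWalk G, 2 ≤ w.len ∧ w.node 0 = i ∧ w.node w.len = j ∧
    (∀ m, 0 < m → m < w.len → w.node m ∈ G.ant {i, j}) ∧
    (∀ k, 1 ≤ k → k + 1 < w.len → (w.kind k = EdgeKind.bidirE ∨ w.kind k = EdgeKind.undirE)) ∧
    (w.kind 0 = EdgeKind.bidirE ∨ w.kind 0 = EdgeKind.dirR) ∧
    (w.kind (w.len - 1) = EdgeKind.bidirE ∨ w.kind (w.len - 1) = EdgeKind.dirL)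

/-- A mixed graph is maximal if every pair of non-adjacent nodes can be separated by some set. -/
def IsMaximal {V : Type u} (G : MixedGraph V) : Prop :=
  ∀ i j : V, i ≠ j → ¬ G.Adj i j → ∃ C : Set V, i ∉ C ∧ j ∉ C ∧ G.Sep {i} {j} C

/-! ## Independence models -/

/-- Pairwise disjointness of three sets. -/
def Disjoint3 {V : Type u} (A B C : Set V) : Prop :=
  Disjoint A B ∧ Disjoint A C ∧ Disjoint B C

/-- A compositional graphoid: an independence model over `V` satisfying symmetry,
decomposition, weak union, contraction, intersection and composition. -/
structure IsCompositionalGraphoid {V : Type u} (J : Set V → Set V → Set V → Prop) : Prop where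
  symm : ∀ A B C : Set V, Disjoint3 A B C → J A B C → J B A C
  decomposition : ∀ A B C D : Set V, Disjoint3 A (B ∪ D) C → J A (B ∪ D) C → J A B C
  weakUnion : ∀ A B C D : Set V, Disjoint3 A (B ∪ D) C → J A (B ∪ D) C → J A B (C ∪ D)
  contraction : ∀ A B C D : Set V, Disjoint3 A B (C ∪ D) → Disjoint3 A D C →
    J A B (C ∪ D) → J A D C → J A (B ∪ D) C
  intersection : ∀ A B C D : Set V, Disjoint3 A B (C ∪ D) → Disjoint3 A D (C ∪ B) →
    J A B (C ∪ D) → J A D (C ∪ B) → J A (B ∪ D) C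
  composition : ∀ A B C D : Set V, Disjoint3 A B C → Disjoint3 A D C →
    J A B C → J A D C → J A (B ∪ D) C

/-- An independence model `J` is Markovian to a mixed graph `G` if every graphical
separation implies the corresponding independence statement. -/
def MarkovTo {V : Type u} (J : Set V → Set V → Set V → Prop) (G : MixedGraph V) : Prop :=
  ∀ A B C : Set V, Disjoint3 A B C → G.Sep A B C → J A B C

/-! ## Graphical interventions -/

/-- The intervened graph `do_C(G)`: for every `i ∈ C`, each undirected edge `i — j` with
`j ∉ C` is replaced by the directed edge `i → j`, undirected edges within `C` are removed,
all directed edges pointing into `i` are removed, and all bidirected edges incident to `i`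
are removed. -/
def doGraph {V : Type*} (G : MixedGraph V) (C : Set V) : MixedGraph V where
  dir i j := (G.dir i j ∧ j ∉ C) ∨ (G.Undir i j ∧ i ∈ C ∧ j ∉ C)
  undir i j := G.undir i j ∧ i ∉ C ∧ j ∉ C
  bidir i j := G.bidir i j ∧ i ∉ C ∧ j ∉ C

/-! ## Counterfactual graphs -/

/-- A node `i ∉ C` of `G` such that `ant(i) ∩ C = ∅` gets merged with its intervened copy
in the counterfactual graph; the intervened copy `i^{do(C)}` is kept exactly when
`CFKeep G C i` holds. -/
def CFKeep {V : Type*} (G : MixedGraph V) (C : Set V) (i : V) : Prop :=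
  i ∈ C ∨ (G.ant {i} ∩ C).Nonempty

/-- The node set of the counterfactual graph `φ(G; C)`: observational nodes `Sum.inl i`
(for all `i ∈ V`, with merged nodes represented by their observational copy) and
intervened nodes `Sum.inr i` for the kept nodes `i^{do(C)}`. -/
abbrev CFNode {V : Type*} (G : MixedGraph V) (C : Set V) : Type _ :=
  V ⊕ {i : V // CFKeep G C i}

/-- The extra bidirected edges of the counterfactual graph between a kept intervened node
`j^{do(C)}` (with `j ∉ C`) and an observational node `i`: `j^{do(C)} ↔ j`,
`j^{do(C)} ↔ i` for `i ↔ j` in `G`, and `j^{do(C)} ↔ i` for `i ∈ τ(j) \ {j}`. -/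
def crossBidir {V : Type*} (G : MixedGraph V) (C : Set V) (i jv : V) : Prop :=
  jv ∉ C ∧ (i = jv ∨ G.Bidir jv i ∨ (i ∈ G.ChainComp jv ∧ i ≠ jv))

/-- The counterfactual graph `φ(G; C)`: the disjoint union of `G` and of `do_C(G)` with
nodes relabelled, in which each intervened node `i^{do(C)}` with `i ∉ C` and
`ant_G(i) ∩ C = ∅` is merged into the observational node `i` (edges being rerouted
accordingly), and bidirected edges are added between kept intervened nodes `i^{do(C)}`
(`i ∉ C`) and the observational nodes `i`, the nodes `j` with `i ↔ j` in `G`, and the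
nodes `j ∈ τ_G(i) \ {i}`. -/
def phiGraph {V : Type*} (G : MixedGraph V) (C : Set V) : MixedGraph (CFNode G C) where
  dir u v :=
    match u, v with
    | .inl i, .inl j => G.dir i j ∨ (¬ CFKeep G C i ∧ ¬ CFKeep G C j ∧ (doGraph G C).dir i j)
    | .inl i, .inr j => ¬ CFKeep G C i ∧ (doGraph G C).dir i j.1
    | .inr i, .inl j => ¬ CFKeep G C j ∧ (doGraph G C).dir i.1 j
    | .inr i, .inr j => (doGraph G C).dir i.1 j.1
  undir u v :=
    match u, v with
    | .inl i, .inl j => G.undir i j ∨ (¬ CFKeep G C i ∧ ¬ CFKeep G C j ∧ (doGraph G C).undir i j)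
    | .inl i, .inr j => ¬ CFKeep G C i ∧ (doGraph G C).undir i j.1
    | .inr i, .inl j => ¬ CFKeep G C j ∧ (doGraph G C).undir i.1 j
    | .inr i, .inr j => (doGraph G C).undir i.1 j.1
  bidir u v :=
    match u, v with
    | .inl i, .inl j => G.bidir i j ∨ (¬ CFKeep G C i ∧ ¬ CFKeep G C j ∧ (doGraph G C).bidir i j)
    | .inl i, .inr j => (¬ CFKeep G C i ∧ (doGraph G C).bidir i j.1) ∨ crossBidir G C i j.1
    | .inr i, .inl j => (¬ CFKeep G C j ∧ (doGraph G C).bidir i.1 j) ∨ crossBidir G C j i.1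
    | .inr i, .inr j => (doGraph G C).bidir i.1 j.1

section Aux

variable {V : Type*} (G : MixedGraph V) (C : Set V)

lemma do_undir_elim {a b : V} (h : (doGraph G C).Undir a b) :
    G.Undir a b ∧ a ∉ C ∧ b ∉ C := by
  rcases h with ⟨h, ha, hb⟩ | ⟨h, hb, ha⟩
  · exact ⟨Or.inl h, ha, hb⟩
  · exact ⟨Or.inr h, ha, hb⟩

lemma do_bidir_elim {a b : V} (h : (doGraph G C).Bidir a b) :
    G.Bidir a b ∧ a ∉ C ∧ b ∉ C := by
  rcases h with ⟨h, ha, hb⟩ | ⟨h, hb, ha⟩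
  · exact ⟨Or.inl h, ha, hb⟩
  · exact ⟨Or.inr h, ha, hb⟩

lemma do_step_elim {a b : V} (h : (doGraph G C).sdStep a b) : G.sdStep a b := by
  rcases h with (⟨h, _⟩ | ⟨h, _, _⟩) | h
  · exact Or.inl h
  · exact Or.inr h
  · exact Or.inr (do_undir_elim G C h).1

lemma do_reach_elim {a b : V} (h : (doGraph G C).SemiDirReach a b) :
    G.SemiDirReach a b :=
  Relation.ReflTransGen.mono (fun _ _ => do_step_elim G C) a b h

lemma do_no_step_into_C {a b : V} (hb : b ∈ C) : ¬ (doGraph G C).sdStep a b := by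
  rintro ((⟨_, h⟩ | ⟨_, _, h⟩) | h)
  · exact h hb
  · exact h hb
  · exact (do_undir_elim G C h).2.2 hb

lemma do_reach_into_C {a b : V} (h : (doGraph G C).SemiDirReach a b) (hb : b ∈ C) :
    a = b := by
  rcases Relation.ReflTransGen.cases_tail h with h | ⟨c, _, hs⟩
  · exact h.symm
  · exact absurd hs (do_no_step_into_C G C hb)

end Aux

/-! ## Statement 7 -/

/-- If `G` is a chain-connected anterial graph then so is the intervened graph
`do_C(G)`. -/
theorem statement_7 {V : Type*} [Fintype V] (G : MixedGraph V)
    (hant : G.IsAnterial) (hcc : G.ChainConnected) (C : Set V) :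
    (doGraph G C).IsAnterial ∧ (doGraph G C).ChainConnected := by
  refine ⟨⟨?_, ?_⟩, ?_⟩
  · -- no semi-directed cycles
    rintro ⟨a, b, hd, hr⟩
    rcases hd with ⟨hd, hb⟩ | ⟨hu, ha, hb⟩
    · exact hant.1 ⟨a, b, hd, do_reach_elim G C hr⟩
    · exact hb (do_reach_into_C G C hr ha ▸ ha)
  · -- bidirected ⇒ no semi-directed path
    intro a b hbd hr
    obtain ⟨hbd', _, _⟩ := do_bidir_elim G C hbd
    exact hant.2 a b hbd' (do_reach_elim G C hr)
  · -- chain-connected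
    intro i j k hbd hk
    obtain ⟨hbd', hi, hj⟩ := do_bidir_elim G C hbd
    have hkG : k ∈ G.ChainComp j ∧ k ∉ C := by
      induction hk with
      | refl => exact ⟨Relation.ReflTransGen.refl, hj⟩
      | tail _ hstep ih =>
        obtain ⟨hu, _, hc⟩ := do_undir_elim G C hstep
        exact ⟨ih.1.tail hu, hc⟩
    have := hcc i j k hbd' hkG.1
    rcases this with h | h
    · exact Or.inl ⟨h, hi, hkG.2⟩
    · exact Or.inr ⟨h, hkG.2, hi⟩
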